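/- Let G be the radius-k star with p ≥ 1 paths, where k ≥ 2 is even. Then the differential chromatic number of G equals p·k/2. -/
import Mathlib


/-- A labeling of the vertices of a finite graph on `n` vertices: a one-to-one
assignment of the numbers `1, …, n` to the vertices. -/
def IsLabeling {V : Type*} [Fintype V] (c : V → ℕ) : Prop :=
  Function.Injective c ∧ ∀ v, c v ∈ Finset.Icc 1 (Fintype.card V)

/-- The differential value of the labeling `c` is at least `d`: every edge has
label difference at least `d`. -/
def DiffValAtLeast {V : Type*} (G : SimpleGraph V) (c : V → ℕ) (d : ℕ) : Prop :=
  ∀ u v, G.Adj u v → d ≤ Nat.dist (c u) (c v)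

/-- The differential chromatic number: the maximum, over all labelings, of the
minimum label difference over the edges. -/
noncomputable def diffChromNum {V : Type*} [Fintype V] (G : SimpleGraph V) : ℕ :=
  sSup {d : ℕ | ∃ c : V → ℕ, IsLabeling c ∧ DiffValAtLeast G c d}

/-- The spider graph with center `none` and `p` attached paths, the `i`-th path
having `ℓ i` vertices `some ⟨i, j⟩` (the vertex `some ⟨i, j⟩` is at level `j + 1`,
i.e. at distance `j + 1` from the center). -/
def spider (p : ℕ) (ℓ : Fin p → ℕ) : SimpleGraph (Option (Σ i : Fin p, Fin (ℓ i))) :=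
  SimpleGraph.fromRel (fun a b =>
    (a = none ∧ ∃ (i : Fin p) (h : 0 < ℓ i), b = some ⟨i, ⟨0, h⟩⟩) ∨
    (∃ (i : Fin p) (x y : Fin (ℓ i)), (x : ℕ) + 1 = (y : ℕ) ∧
      a = some ⟨i, x⟩ ∧ b = some ⟨i, y⟩))

/-- The number of vertices of the spider at even positive level (the vertex
`some ⟨i, j⟩` is at level `j + 1`). -/
def spiderNe (p : ℕ) (ℓ : Fin p → ℕ) : ℕ :=
  (Finset.univ.filter (fun v : Σ i : Fin p, Fin (ℓ i) => (v.2 : ℕ) % 2 = 1)).card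

/-- The number of vertices of the spider at odd level. -/
def spiderNo (p : ℕ) (ℓ : Fin p → ℕ) : ℕ :=
  (Finset.univ.filter (fun v : Σ i : Fin p, Fin (ℓ i) => (v.2 : ℕ) % 2 = 0)).card

/-! ### Auxiliary material -/

/-- The good labeling of the radius-`2t` spider. -/
def lab (p t : ℕ) : Option (Σ _ : Fin p, Fin (2 * t)) → ℕ
  | none => 1
  | some ⟨i, j⟩ =>
      if (j : ℕ) % 2 = 1 then 2 + (i : ℕ) * t + (j : ℕ) / 2
      else p * t + 2 + (i : ℕ) * t + (j : ℕ) / 2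

lemma card_spider (p t : ℕ) :
    Fintype.card (Option (Σ _ : Fin p, Fin (2 * t))) = 2 * (p * t) + 1 := by
  simp [Fintype.card_option, Fintype.card_sigma]
  ring

lemma base_rep {t : ℕ} (i i' a a' : ℕ) (ha : a < t) (ha' : a' < t)
    (h : i * t + a = i' * t + a') : i = i' ∧ a = a' := by
  have e1 : ∀ (i a : ℕ), a < t → (i * t + a) / t = i := fun i a h => by
    rw [add_comm, mul_comm, Nat.add_mul_div_left _ _ (by omega : 0 < t),
      Nat.div_eq_of_lt h, zero_add]
  have e2 : ∀ (i a : ℕ), a < t → (i * t + a) % t = a := fun i a h => by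
    rw [add_comm, mul_comm, Nat.add_mul_mod_self_left, Nat.mod_eq_of_lt h]
  exact ⟨by rw [← e1 i a ha, h, e1 i' a' ha'],
         by rw [← e2 i a ha, h, e2 i' a' ha']⟩

lemma mul_t_bound {p t : ℕ} (i : Fin p) : (i : ℕ) * t + t ≤ p * t := by
  have : ((i : ℕ) + 1) * t ≤ p * t := Nat.mul_le_mul_right t i.isLt
  nlinarith [this]

lemma lab_isLabeling (p t : ℕ) (hp : 1 ≤ p) (ht : 1 ≤ t) : IsLabeling (lab p t) := by
  constructor
  · rintro (_ | ⟨i, j⟩) (_ | ⟨i', j'⟩) h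
    · rfl
    · simp only [lab] at h
      have := mul_t_bound (t := t) i'
      split_ifs at h <;> omega
    · simp only [lab] at h
      have := mul_t_bound (t := t) i
      split_ifs at h <;> omega
    · simp only [lab] at h
      have hj : (j : ℕ) < 2 * t := j.isLt
      have hj' : (j' : ℕ) < 2 * t := j'.isLt
      have h1 : (j : ℕ) / 2 < t := by omega
      have h2 : (j' : ℕ) / 2 < t := by omega
      have hb := mul_t_bound (t := t) i
      have hb' := mul_t_bound (t := t) i'
      split_ifs at h with hp1 hp2 hp2
      · obtain ⟨hi, hj⟩ := base_rep (i : ℕ) (i' : ℕ) _ _ h1 h2 (by omega)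
        have : i = i' := Fin.ext hi
        subst this
        have : j = j' := Fin.ext (by omega)
        subst this
        rfl
      · omega
      · omega
      · obtain ⟨hi, hj⟩ := base_rep (i : ℕ) (i' : ℕ) _ _ h1 h2 (by omega)
        have : i = i' := Fin.ext hi
        subst this
        have : j = j' := Fin.ext (by omega)
        subst this
        rfl
  · rintro (_ | ⟨i, j⟩) <;> rw [card_spider] <;> simp only [lab, Finset.mem_Icc]
    · omega
    · have hj : (j : ℕ) < 2 * t := j.isLt
      have hb := mul_t_bound (t := t) i
      split_ifs <;> omega

lemma lab_diffVal (p t : ℕ) (hp : 1 ≤ p) (ht : 1 ≤ t) :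
    DiffValAtLeast (spider p (fun _ => 2 * t)) (lab p t) (p * t) := by
  have key : ∀ a b, ((a = none ∧ ∃ (i : Fin p) (h : 0 < 2 * t), b = some ⟨i, ⟨0, h⟩⟩) ∨
      (∃ (i : Fin p) (x y : Fin (2 * t)), (x : ℕ) + 1 = (y : ℕ) ∧
        a = some ⟨i, x⟩ ∧ b = some ⟨i, y⟩)) →
      p * t ≤ Nat.dist (lab p t a) (lab p t b) := by
    rintro a b (⟨rfl, i, h0, rfl⟩ | ⟨i, x, y, hxy, rfl, rfl⟩)
    · simp only [lab, Nat.dist]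
      norm_num
      omega
    · have hx : (x : ℕ) < 2 * t := x.isLt
      simp only [lab, Nat.dist]
      split_ifs <;> omega
  intro u v huv
  rw [spider, SimpleGraph.fromRel_adj] at huv
  rcases huv.2 with h | h
  · exact key u v h
  · rw [Nat.dist_comm]; exact key v u h

lemma spider_no_isolated (p t : ℕ) (hp : 1 ≤ p) (ht : 1 ≤ t)
    (v : Option (Σ _ : Fin p, Fin (2 * t))) :
    ∃ u, (spider p (fun _ => 2 * t)).Adj u v := by
  have h2t : 0 < 2 * t := by omega
  rcases v with _ | ⟨i, j⟩
  · refine ⟨some ⟨⟨0, hp⟩, ⟨0, h2t⟩⟩, ?_⟩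
    rw [spider, SimpleGraph.fromRel_adj]
    exact ⟨by simp, Or.inr (Or.inl ⟨rfl, ⟨0, hp⟩, h2t, rfl⟩)⟩
  · rcases Nat.eq_zero_or_pos (j : ℕ) with h0 | h0
    · refine ⟨none, ?_⟩
      rw [spider, SimpleGraph.fromRel_adj]
      refine ⟨by simp, Or.inl (Or.inl ⟨rfl, i, h2t, ?_⟩)⟩
      congr 1
      exact congrArg _ (Fin.ext (by simp [h0]))
    · refine ⟨some ⟨i, ⟨(j : ℕ) - 1, by omega⟩⟩, ?_⟩
      rw [spider, SimpleGraph.fromRel_adj]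
      refine ⟨?_, Or.inl (Or.inr ⟨i, ⟨(j : ℕ) - 1, by omega⟩, j, by show (j : ℕ) - 1 + 1 = (j : ℕ); omega, rfl, rfl⟩)⟩
      simp only [ne_eq, Option.some.injEq, Sigma.mk.inj_iff, heq_eq_eq, true_and]
      intro h
      have := congrArg Fin.val h
      simp only [Fin.val_mk] at this
      omega

lemma upper_bound (p t d : ℕ) (hp : 1 ≤ p) (ht : 1 ≤ t)
    (c : Option (Σ _ : Fin p, Fin (2 * t)) → ℕ)
    (hc : IsLabeling c) (hd : DiffValAtLeast (spider p (fun _ => 2 * t)) c d) :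
    d ≤ p * t := by
  by_contra hcon
  push_neg at hcon
  obtain ⟨hinj, hmem⟩ := hc
  have hcard := card_spider p t
  -- the image of c is all of Icc 1 (2pt+1)
  have himg : Finset.image c Finset.univ = Finset.Icc 1 (2 * (p * t) + 1) := by
    apply Finset.eq_of_subset_of_card_le
    · intro x hx
      simp only [Finset.mem_image] at hx
      obtain ⟨v, _, rfl⟩ := hx
      have := hmem v
      rwa [hcard] at this
    · rw [Finset.card_image_of_injective _ hinj, Finset.card_univ, hcard,
        Nat.card_Icc]
      omega
  have hmemmid : p * t + 1 ∈ Finset.image c Finset.univ := by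
    rw [himg, Finset.mem_Icc]; omega
  simp only [Finset.mem_image] at hmemmid
  obtain ⟨v, _, hv⟩ := hmemmid
  obtain ⟨u, hu⟩ := spider_no_isolated p t hp ht v
  have h1 := hd u v hu
  have h2 := hmem u
  rw [hcard, Finset.mem_Icc] at h2
  rw [hv] at h1
  simp only [Nat.dist] at h1
  omega

/-- The radius-`k` star with `p ≥ 1` paths (each attached path having exactly `k`
vertices), where `k ≥ 2` is even, has differential chromatic number `p·k/2`. -/
theorem stmt_10 (p k : ℕ) (hp : 1 ≤ p) (hk : 2 ≤ k) (hke : Even k) :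
    diffChromNum (spider p (fun _ => k)) = p * k / 2 := by
  obtain ⟨t, ht⟩ := hke
  have hk2 : k = 2 * t := by omega
  subst hk2
  have ht1 : 1 ≤ t := by omega
  have hset : {d : ℕ | ∃ c : Option (Σ _ : Fin p, Fin (2 * t)) → ℕ,
      IsLabeling c ∧ DiffValAtLeast (spider p (fun _ => 2 * t)) c d} = Set.Iic (p * t) := by
    ext d
    simp only [Set.mem_setOf_eq, Set.mem_Iic]
    constructor
    · rintro ⟨c, hc, hd⟩
      exact upper_bound p t d hp ht1 c hc hd
    · intro hd
      refine ⟨lab p t, lab_isLabeling p t hp ht1, fun u v huv => ?_⟩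
      exact le_trans hd (lab_diffVal p t hp ht1 u v huv)
  rw [diffChromNum, hset, csSup_Iic]
  rw [show p * (2 * t) = p * t * 2 by ring, Nat.mul_div_cancel _ (by norm_num)]
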